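/- Let (Ω, F, P) be a probability space, A ≥ 1 a natural number, π : {1,…,A} → ℝ with π(a) ≥ 0, and let (X_{a,i})_{a∈{1,…,A}, i∈ℕ} be a mutually independent family of square-integrable real random variables such that for every a and i, X_{a,i} has mean μ(a) and variance σ(a)², with σ(a) ≥ 0 denoting the standard deviation. Then for every allocation T : {1,…,A} → ℕ with T(a) ≥ 1 for all a and Σ_a T(a) = n, the estimator Y_T := Σ_a π(a)·(1/T(a))·Σ_{i=1}^{T(a)} X_{a,i} satisfies E[(Y_T − V)²] ≥ (Σ_a π(a)·σ(a))²/n, where V := Σ_a π(a)·μ(a). -/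

import Mathlib

open MeasureTheory ProbabilityTheory Finset

/-- Bandit optimal-proportion lower bound: with mutually independent samples `X (a, i)` of
mean `μ a`, variance `σ a ^ 2` (standard deviation `σ a ≥ 0`), any deterministic allocation
`T` of a total budget `n = ∑ a, T a` with `T a ≥ 1` gives MSE of the plug-in policy-value
estimator at least the oracle value `(∑ a, π a · σ a)² / n`. -/
theorem bandit_mse_lower_bound
    {Ω : Type*} [MeasurableSpace Ω] (P : Measure Ω) [IsProbabilityMeasure P]
    (A : ℕ) (hA : 1 ≤ A) (π : Fin A → ℝ) (hπ : ∀ a, 0 ≤ π a)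
    (X : Fin A × ℕ → Ω → ℝ) (μ σ : Fin A → ℝ) (hσ : ∀ a, 0 ≤ σ a)
    (hindep : iIndepFun X P)
    (hL2 : ∀ ai, MemLp (X ai) 2 P)
    (hmean : ∀ a i, ∫ ω, X (a, i) ω ∂P = μ a)
    (hvar : ∀ a i, variance (X (a, i)) P = σ a ^ 2)
    (T : Fin A → ℕ) (hT : ∀ a, 1 ≤ T a) (n : ℕ) (hn : ∑ a, T a = n) :
    (∑ a, π a * σ a) ^ 2 / (n : ℝ)
      ≤ ∫ ω, ((∑ a, π a * ((1 / (T a : ℝ)) * ∑ i ∈ Finset.range (T a), X (a, i) ω))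
          - ∑ a, π a * μ a) ^ 2 ∂P := by
  classical
  have hTpos : ∀ a, (0 : ℝ) < T a := fun a => by exact_mod_cast hT a
  -- the centered, scaled variables
  set Z : Fin A × ℕ → Ω → ℝ :=
    fun p ω => (π p.1 / T p.1) * (X p ω - μ p.1) with hZ
  have hZL2 : ∀ p, MemLp (Z p) 2 P := fun p => by
    have := ((hL2 p).sub (memLp_const (μ p.1))).const_mul (π p.1 / T p.1)
    simpa [hZ] using this
  have hXint : ∀ p : Fin A × ℕ, Integrable (X p) P :=
    fun p => (hL2 p).integrable one_le_two
  have hZint : ∀ p, ∫ ω, Z p ω ∂P = 0 := by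
    rintro ⟨a, i⟩
    simp only [hZ]
    rw [integral_const_mul, integral_sub (hXint (a, i)) (integrable_const _), hmean a i]
    simp
  have hZvar : ∀ p, variance (Z p) P = (π p.1 / T p.1) ^ 2 * σ p.1 ^ 2 := by
    rintro ⟨a, i⟩
    have hc : variance (Z (a, i)) P
        = (π a / T a) ^ 2 * variance (fun ω => X (a, i) ω - μ a) P := by
      simpa [hZ] using variance_const_mul (π a / T a) (fun ω => X (a, i) ω - μ a) P
    have hsubL2 : MemLp (fun ω => X (a, i) ω - μ a) 2 P := by
      exact (hL2 (a, i)).sub (memLp_const (μ a))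
    have hsubint : ∫ ω, (X (a, i) ω - μ a) ∂P = 0 := by
      rw [integral_sub (hXint (a, i)) (integrable_const _), hmean a i]; simp
    have h1 : variance (fun ω => X (a, i) ω - μ a) P = variance (X (a, i)) P := by
      rw [variance_of_integral_eq_zero hsubL2.aemeasurable hsubint,
        variance_eq_integral (hL2 (a, i)).aemeasurable, hmean a i]
    rw [hc, h1, hvar a i]
  -- the index set
  set s : Finset (Fin A × ℕ) :=
    Finset.univ.biUnion (fun a => (Finset.range (T a)).image (fun i => (a, i))) with hs
  have hmem : ∀ p : Fin A × ℕ, p ∈ s ↔ p.2 ∈ Finset.range (T p.1) := by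
    rintro ⟨a, i⟩
    simp [hs]
  have hdisj : (↑(Finset.univ : Finset (Fin A)) : Set (Fin A)).PairwiseDisjoint
      (fun a => (Finset.range (T a)).image (fun i => (a, i))) := by
    intro a _ b _ hab
    simp only [Finset.disjoint_left, Finset.mem_image, Finset.mem_range]
    rintro p ⟨i, _, rfl⟩ ⟨j, _, hj⟩
    exact hab (congrArg Prod.fst hj).symm
  have hsum_s : ∀ f : Fin A × ℕ → ℝ,
      ∑ p ∈ s, f p = ∑ a, ∑ i ∈ Finset.range (T a), f (a, i) := by
    intro f
    rw [hs, Finset.sum_biUnion hdisj]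
    refine Finset.sum_congr rfl fun a _ => ?_
    rw [Finset.sum_image (by intro x _ y _ h; exact (Prod.mk.injEq _ _ _ _).mp h |>.2)]
  -- pairwise independence of the Z's
  have hZindep : Set.Pairwise ↑s fun p q => IndepFun (Z p) (Z q) P := by
    intro p _ q _ hpq
    have h := (hindep.indepFun hpq).comp
      (measurable_const.mul ((measurable_id.sub measurable_const)) :
        Measurable fun x => (π p.1 / T p.1) * (x - μ p.1))
      (measurable_const.mul ((measurable_id.sub measurable_const)) :
        Measurable fun x => (π q.1 / T q.1) * (x - μ q.1))
    exact h
  -- sum of Z's has MemLp and mean zero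
  set W : Ω → ℝ := ∑ p ∈ s, Z p with hW
  have hWL2 : MemLp W 2 P := memLp_finset_sum' _ fun p _ => hZL2 p
  have hWint : ∫ ω, W ω ∂P = 0 := by
    rw [hW]
    have : ∫ ω, (∑ p ∈ s, Z p) ω ∂P = ∑ p ∈ s, ∫ ω, Z p ω ∂P := by
      simp only [Finset.sum_apply]
      exact integral_finset_sum s fun p _ => ((hZL2 p).integrable one_le_two)
    rw [this]
    exact Finset.sum_eq_zero fun p _ => hZint p
  -- identify the integrand with W ^ 2
  have hWeq : ∀ ω, ((∑ a, π a * ((1 / (T a : ℝ)) * ∑ i ∈ Finset.range (T a), X (a, i) ω))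
      - ∑ a, π a * μ a) = W ω := by
    intro ω
    rw [hW]
    simp only [Finset.sum_apply]
    rw [hsum_s (fun p => Z p ω), ← Finset.sum_sub_distrib]
    refine Finset.sum_congr rfl fun a _ => ?_
    simp only [hZ, mul_sub, Finset.sum_sub_distrib, Finset.sum_const, Finset.card_range,
      nsmul_eq_mul, ← Finset.mul_sum]
    have hTa : (T a : ℝ) ≠ 0 := (hTpos a).ne'
    field_simp
  -- variance computation
  have hvarW : variance W P = ∑ a, π a ^ 2 * σ a ^ 2 / T a := by
    rw [hW, IndepFun.variance_sum (fun p _ => hZL2 p) hZindep,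
      hsum_s (fun p => variance (Z p) P)]
    refine Finset.sum_congr rfl fun a _ => ?_
    have hZa : ∀ i : ℕ, variance (Z (a, i)) P = (π a / T a) ^ 2 * σ a ^ 2 :=
      fun i => hZvar (a, i)
    rw [Finset.sum_congr rfl fun i _ => hZa i, Finset.sum_const, Finset.card_range,
      nsmul_eq_mul]
    have hTa : (T a : ℝ) ≠ 0 := (hTpos a).ne'
    field_simp
  have hMSE : ∫ ω, ((∑ a, π a * ((1 / (T a : ℝ)) * ∑ i ∈ Finset.range (T a), X (a, i) ω))
      - ∑ a, π a * μ a) ^ 2 ∂P = ∑ a, π a ^ 2 * σ a ^ 2 / T a := by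
    rw [← hvarW, variance_of_integral_eq_zero hWL2.aemeasurable hWint]
    refine integral_congr_ae (Filter.Eventually.of_forall fun ω => ?_)
    simp only [Pi.pow_apply]
    rw [hWeq ω]
  rw [hMSE]
  -- Cauchy–Schwarz step
  have hnpos : (0 : ℝ) < n := by
    have : 1 ≤ n := by
      rw [← hn]
      calc 1 ≤ A := hA
      _ = ∑ _a : Fin A, 1 := by simp
      _ ≤ ∑ a, T a := Finset.sum_le_sum fun a _ => hT a
    exact_mod_cast this
  rw [div_le_iff₀ hnpos]
  have hcs := Finset.sum_mul_sq_le_sq_mul_sq Finset.univ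
    (fun a => π a * σ a / Real.sqrt (T a)) (fun a => Real.sqrt (T a))
  have h1 : ∀ a : Fin A, π a * σ a / Real.sqrt (T a) * Real.sqrt (T a) = π a * σ a := by
    intro a
    have : Real.sqrt (T a) ≠ 0 := (Real.sqrt_pos.mpr (hTpos a)).ne'
    field_simp
  have h2 : ∀ a : Fin A, (π a * σ a / Real.sqrt (T a)) ^ 2 = π a ^ 2 * σ a ^ 2 / T a := by
    intro a
    rw [div_pow, Real.sq_sqrt (hTpos a).le, mul_pow]
  have h3 : ∀ a : Fin A, (Real.sqrt (T a)) ^ 2 = (T a : ℝ) := fun a =>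
    Real.sq_sqrt (hTpos a).le
  calc (∑ a, π a * σ a) ^ 2
      = (∑ a, π a * σ a / Real.sqrt (T a) * Real.sqrt (T a)) ^ 2 := by
        rw [Finset.sum_congr rfl fun a _ => (h1 a).symm]
    _ ≤ (∑ a, (π a * σ a / Real.sqrt (T a)) ^ 2) * ∑ a, (Real.sqrt (T a)) ^ 2 := hcs
    _ = (∑ a, π a ^ 2 * σ a ^ 2 / T a) * n := by
        rw [Finset.sum_congr rfl fun a _ => h2 a, Finset.sum_congr rfl fun a _ => h3 a,
          ← Nat.cast_sum, hn]
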